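/- For x ∈ {0,1}^T and p ∈ [0,1]^T, if D₁,…,D_T are probability distributions supported on a finite set S ⊂ [0,1] with Σ_{t=1}^T (x_t − α)·D_t({α}) = 0 for every α ∈ [0,1], then CalDist(x,p) ≤ Σ_{t=1}^T E_{q_t∼D_t}|p_t − q_t| + 4|S|. -/

import Mathlib

open Finset


lemma exists_perm_cost_le {n : Type*} [Fintype n] [DecidableEq n] (M : Matrix n n ℝ)
    (hM : M ∈ doublyStochastic ℝ n) (c : n → n → ℝ) :
    ∃ τ : Equiv.Perm n, ∑ i, c i (τ i) ≤ ∑ i, ∑ j, M i j * c i j := by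
  obtain ⟨w, hw0, hw1, hweq⟩ := exists_eq_sum_perm_of_mem_doublyStochastic hM
  have hentry : ∀ (σ : Equiv.Perm n) (i j : n),
      (σ.permMatrix ℝ) i j = if σ i = j then 1 else 0 := by
    intro σ i j
    simp [Equiv.Perm.permMatrix, PEquiv.toMatrix_apply, Equiv.toPEquiv_apply, eq_comm]
  have hexp : ∀ i j, M i j = ∑ σ : Equiv.Perm n, w σ * (σ.permMatrix ℝ) i j := by
    intro i j
    rw [← hweq]
    simp [Matrix.sum_apply]
  have key : ∀ i, ∑ j, M i j * c i j = ∑ σ : Equiv.Perm n, w σ * c i (σ i) := by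
    intro i
    calc ∑ j, M i j * c i j
        = ∑ j, ∑ σ : Equiv.Perm n, w σ * (σ.permMatrix ℝ) i j * c i j := by
          refine Finset.sum_congr rfl fun j _ => ?_
          rw [hexp i j, Finset.sum_mul]
      _ = ∑ σ : Equiv.Perm n, ∑ j, w σ * (σ.permMatrix ℝ) i j * c i j := Finset.sum_comm
      _ = ∑ σ : Equiv.Perm n, w σ * c i (σ i) := by
          refine Finset.sum_congr rfl fun σ _ => ?_
          simp [hentry, ite_mul, mul_ite, Equiv.toPEquiv_apply]
  have hcost : ∑ i, ∑ j, M i j * c i j = ∑ σ : Equiv.Perm n, w σ * ∑ i, c i (σ i) := by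
    calc ∑ i, ∑ j, M i j * c i j
        = ∑ i, ∑ σ : Equiv.Perm n, w σ * c i (σ i) := by
          exact Finset.sum_congr rfl fun i _ => key i
      _ = ∑ σ : Equiv.Perm n, ∑ i, w σ * c i (σ i) := Finset.sum_comm
      _ = ∑ σ : Equiv.Perm n, w σ * ∑ i, c i (σ i) := by
          exact Finset.sum_congr rfl fun σ _ => (Finset.mul_sum _ _ _).symm
  by_contra h
  push_neg at h
  have hpos : ∃ σ : Equiv.Perm n, 0 < w σ := by
    by_contra h2
    push_neg at h2
    have : ∑ σ : Equiv.Perm n, w σ = 0 :=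
      Finset.sum_eq_zero fun σ _ => le_antisymm (h2 σ) (hw0 σ)
    rw [hw1] at this; norm_num at this
  obtain ⟨σ₀, hσ₀⟩ := hpos
  have hlt : ∑ σ : Equiv.Perm n, w σ * (∑ i, ∑ j, M i j * c i j)
      < ∑ σ : Equiv.Perm n, w σ * ∑ i, c i (σ i) := by
    apply Finset.sum_lt_sum
    · intro σ _
      exact mul_le_mul_of_nonneg_left (h σ).le (hw0 σ)
    · exact ⟨σ₀, Finset.mem_univ _, by
        exact mul_lt_mul_of_pos_left (h σ₀) hσ₀⟩
  rw [← Finset.sum_mul, hw1, one_mul, ← hcost] at hlt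
  exact lt_irrefl _ hlt


lemma transport {ι : Type*} [Fintype ι] [DecidableEq ι] (p : ι → ℝ) (S : Finset ℝ)
    (π : ι → ℝ → ℝ) (k : ℝ → ℕ)
    (hπ0 : ∀ t a, a ∈ S → 0 ≤ π t a)
    (hrow : ∀ t, ∑ a ∈ S, π t a = 1)
    (hcol : ∀ a ∈ S, ∑ t : ι, π t a = (k a : ℝ)) :
    ∃ σ : ι → ℝ, (∀ t, σ t ∈ S) ∧
      (∀ a ∈ S, (Finset.univ.filter (fun t => σ t = a)).card = k a) ∧
      ∑ t : ι, |p t - σ t| ≤ ∑ t : ι, ∑ a ∈ S, π t a * |p t - a| := by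
  classical
  have hzero : ∀ a ∈ S, k a = 0 → ∀ t : ι, π t a = 0 := by
    intro a ha hk t
    have h0 : ∑ t : ι, π t a = 0 := by rw [hcol a ha, hk, Nat.cast_zero]
    exact (Finset.sum_eq_zero_iff_of_nonneg (fun t _ => hπ0 t a ha)).1 h0 t (mem_univ t)
  have hJsum : ∀ g : ℝ → ℝ,
      ∑ s : (a : {y // y ∈ S}) × Fin (k a.1), g s.1.1 = ∑ a ∈ S, (k a : ℝ) * g a := by
    intro g
    rw [← Finset.univ_sigma_univ, Finset.sum_sigma]
    rw [← Finset.sum_coe_sort S (fun a => (k a : ℝ) * g a)]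
    refine Finset.sum_congr rfl fun a _ => ?_
    simp [Finset.sum_const, nsmul_eq_mul]
  have hJcard : ∀ a ∈ S,
      (Finset.univ.filter (fun s : (a : {y // y ∈ S}) × Fin (k a.1) => s.1.1 = a)).card = k a := by
    intro a ha
    rw [Finset.card_filter]
    rw [← Finset.univ_sigma_univ, Finset.sum_sigma]
    have : ∀ b : {y // y ∈ S}, (∑ _i : Fin (k b.1), if b.1 = a then 1 else 0)
        = if b.1 = a then k b.1 else 0 := by
      intro b
      by_cases h : b.1 = a <;> simp [h]
    simp only [this]
    rw [Finset.sum_coe_sort S (fun b => if b = a then k b else 0)]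
    rw [Finset.sum_ite_eq' S a k, if_pos ha]
  have hcards : Fintype.card ι = Fintype.card ((a : {y // y ∈ S}) × Fin (k a.1)) := by
    have h1 : Fintype.card ((a : {y // y ∈ S}) × Fin (k a.1)) = ∑ a ∈ S, k a := by
      rw [Fintype.card_sigma, ← Finset.sum_coe_sort S (fun a => k a)]
      simp
    have h2 : (Fintype.card ι : ℝ) = ∑ a ∈ S, (k a : ℝ) := by
      calc (Fintype.card ι : ℝ) = ∑ _t : ι, (1 : ℝ) := by simp
        _ = ∑ t : ι, ∑ a ∈ S, π t a := by
            exact Finset.sum_congr rfl fun t _ => (hrow t).symm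
        _ = ∑ a ∈ S, ∑ t : ι, π t a := Finset.sum_comm
        _ = ∑ a ∈ S, (k a : ℝ) := Finset.sum_congr rfl fun a ha => hcol a ha
    have h3 : (Fintype.card ι : ℝ) = ((∑ a ∈ S, k a : ℕ) : ℝ) := by push_cast; exact h2
    have h4 : Fintype.card ι = ∑ a ∈ S, k a := by exact_mod_cast h3
    rw [h1]; exact h4
  obtain ⟨e⟩ : Nonempty (ι ≃ (a : {y // y ∈ S}) × Fin (k a.1)) :=
    ⟨Fintype.equivOfCardEq hcards⟩
  have hkpos : ∀ u : ι, 0 < k ((e u).1.1) := fun u => Nat.pos_of_ne_zero (by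
    intro h
    exact absurd ((e u).2.isLt) (by simp [h]))
  set M : Matrix ι ι ℝ := fun t u => π t ((e u).1.1) / (k ((e u).1.1) : ℝ) with hMdef
  have collapse : ∀ (f : ι → ℝ → ℝ) (t : ι),
      ∑ u : ι, π t ((e u).1.1) / (k ((e u).1.1) : ℝ) * f t ((e u).1.1)
        = ∑ a ∈ S, π t a * f t a := by
    intro f t
    rw [Equiv.sum_comp e (fun s => π t s.1.1 / (k s.1.1 : ℝ) * f t s.1.1)]
    rw [hJsum (fun a => π t a / (k a : ℝ) * f t a)]
    refine Finset.sum_congr rfl fun a ha => ?_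
    by_cases hk : k a = 0
    · simp [hk, hzero a ha hk t]
    · have hne : (k a : ℝ) ≠ 0 := Nat.cast_ne_zero.2 hk
      rw [show (k a : ℝ) * (π t a / (k a : ℝ) * f t a)
          = (k a : ℝ) / (k a : ℝ) * (π t a * f t a) by ring, div_self hne, one_mul]
  have hDS : M ∈ doublyStochastic ℝ ι := by
    rw [mem_doublyStochastic_iff_sum]
    refine ⟨fun t u => div_nonneg (hπ0 t _ (e u).1.2) (Nat.cast_nonneg _), ?_, ?_⟩
    · intro t
      have h := collapse (fun _ _ => 1) t
      simpa [hrow t] using h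
    · intro u
      have hne : ((k ((e u).1.1) : ℝ)) ≠ 0 := by
        exact_mod_cast (hkpos u).ne'
      calc ∑ t : ι, M t u = (∑ t : ι, π t ((e u).1.1)) / (k ((e u).1.1) : ℝ) := by
            rw [Finset.sum_div]
        _ = 1 := by rw [hcol _ (e u).1.2]; field_simp
  obtain ⟨τ, hτ⟩ := exists_perm_cost_le M hDS (fun t u => |p t - (e u).1.1|)
  refine ⟨fun t => (e (τ t)).1.1, fun t => (e (τ t)).1.2, ?_, ?_⟩
  · intro a ha
    rw [← hJcard a ha]
    apply Finset.card_bij (fun t _ => e (τ t))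
    · intro t ht
      simp only [mem_filter, mem_univ, true_and] at ht ⊢
      exact ht
    · intro t1 _ t2 _ h
      exact τ.injective (e.injective h)
    · intro s hs
      refine ⟨τ.symm (e.symm s), ?_, by simp⟩
      simp only [mem_filter, mem_univ, true_and] at hs ⊢
      simpa using hs
  · calc ∑ t : ι, |p t - (e (τ t)).1.1| ≤ ∑ t : ι, ∑ u : ι, M t u * |p t - (e u).1.1| := hτ
      _ = ∑ t : ι, ∑ a ∈ S, π t a * |p t - a| := by
          refine Finset.sum_congr rfl fun t _ => ?_
          exact collapse (fun t a => |p t - a|) t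


lemma class_assign {ι : Type*} [Fintype ι] [DecidableEq ι] (p : ι → ℝ)
    (hp : ∀ t, p t ∈ Set.Icc (0:ℝ) 1) (S : Finset ℝ) (hS : ∀ a ∈ S, a ∈ Set.Icc (0:ℝ) 1)
    (π : ι → ℝ → ℝ) (hπ0 : ∀ t a, a ∈ S → 0 ≤ π t a) (hrow : ∀ t, ∑ a ∈ S, π t a = 1) :
    ∃ (σ : ι → ℝ) (k : ℝ → ℕ), (∀ t, σ t ∈ S) ∧
      (∀ a ∈ S, (Finset.univ.filter (fun t => σ t = a)).card = k a) ∧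
      (∀ a ∈ S, |(k a : ℝ) - ∑ t : ι, π t a| ≤ 1) ∧
      ∑ t : ι, |p t - σ t| ≤ (∑ t : ι, ∑ a ∈ S, π t a * |p t - a|) + S.card := by
  classical
  set o : ℝ → ℝ := fun a => ∑ t : ι, π t a with ho
  have ho0 : ∀ a ∈ S, 0 ≤ o a := fun a ha => Finset.sum_nonneg fun t _ => hπ0 t a ha
  have hosum : ∑ a ∈ S, o a = (Fintype.card ι : ℝ) := by
    rw [Finset.sum_comm]
    simp [hrow]
  -- rounding
  have hfl : ∀ a ∈ S, ((⌊o a⌋₊ : ℝ)) ≤ o a := fun a ha => Nat.floor_le (ho0 a ha)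
  have hfl2 : ∀ a ∈ S, o a < (⌊o a⌋₊ : ℝ) + 1 := fun a _ => Nat.lt_floor_add_one (o a)
  have hle : ∑ a ∈ S, ⌊o a⌋₊ ≤ Fintype.card ι := by
    have : ((∑ a ∈ S, ⌊o a⌋₊ : ℕ) : ℝ) ≤ (Fintype.card ι : ℝ) := by
      push_cast
      rw [← hosum]
      exact Finset.sum_le_sum hfl
    exact_mod_cast this
  have hge : Fintype.card ι ≤ ∑ a ∈ S, ⌊o a⌋₊ + S.card := by
    have : (Fintype.card ι : ℝ) ≤ ((∑ a ∈ S, ⌊o a⌋₊ + S.card : ℕ) : ℝ) := by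
      push_cast
      rw [← hosum]
      calc ∑ a ∈ S, o a ≤ ∑ a ∈ S, ((⌊o a⌋₊ : ℝ) + 1) :=
            Finset.sum_le_sum fun a ha => (hfl2 a ha).le
        _ = (∑ a ∈ S, (⌊o a⌋₊ : ℝ)) + S.card := by
            rw [Finset.sum_add_distrib]; simp
    exact_mod_cast this
  have hr : Fintype.card ι - ∑ a ∈ S, ⌊o a⌋₊ ≤ S.card := by omega
  obtain ⟨E, hES, hEcard⟩ := Finset.exists_subset_card_eq hr
  set k : ℝ → ℕ := fun a => ⌊o a⌋₊ + (if a ∈ E then 1 else 0) with hk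
  have hksum : ∑ a ∈ S, k a = Fintype.card ι := by
    rw [hk]
    rw [Finset.sum_add_distrib]
    have h1 : ∑ a ∈ S, (if a ∈ E then 1 else 0) = E.card := by
      rw [Finset.sum_ite_mem]
      rw [Finset.inter_eq_right.2 hES]
      simp
    rw [h1, hEcard]
    omega
  have hk1 : ∀ a ∈ S, |(k a : ℝ) - o a| ≤ 1 := by
    intro a ha
    rw [hk]
    by_cases hE : a ∈ E
    · simp only [hE, if_pos]
      rw [abs_le]
      push_cast
      constructor <;> [linarith [hfl2 a ha]; linarith [hfl a ha]]
    · simp only [hE, if_neg, if_false]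
      rw [abs_le]
      push_cast
      constructor <;> [linarith [hfl2 a ha]; linarith [hfl a ha]]
  -- marginal fix
  set W : ℝ := ∑ b ∈ S, max 0 (o b - k b) with hW
  have hW0 : 0 ≤ W := Finset.sum_nonneg fun b _ => le_max_left _ _
  have hsumdiff : ∑ a ∈ S, ((k a : ℝ) - o a) = 0 := by
    rw [Finset.sum_sub_distrib, hosum]
    have : ∑ a ∈ S, ((k a : ℝ)) = ((∑ a ∈ S, k a : ℕ) : ℝ) := by push_cast; ring
    rw [this, hksum]
    ring
  have hWsum : ∑ a ∈ S, max 0 ((k a : ℝ) - o a) = W := by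
    have key : ∀ u : ℝ, max 0 u - max 0 (-u) = u := by
      intro u
      rcases le_total u 0 with h | h
      · rw [max_eq_left h, max_eq_right (by linarith)]; ring
      · rw [max_eq_right h, max_eq_left (by linarith)]; ring
    have : ∑ a ∈ S, (max 0 ((k a : ℝ) - o a) - max 0 (o a - (k a : ℝ))) = 0 := by
      calc ∑ a ∈ S, (max 0 ((k a : ℝ) - o a) - max 0 (o a - (k a : ℝ)))
          = ∑ a ∈ S, ((k a : ℝ) - o a) := by
            refine Finset.sum_congr rfl fun a _ => ?_
            have := key ((k a : ℝ) - o a)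
            rw [show -((k a:ℝ) - o a) = o a - (k a:ℝ) by ring] at this
            exact this
        _ = 0 := hsumdiff
    rw [Finset.sum_sub_distrib] at this
    rw [hW]
    linarith
  set μ : ℝ → ℝ := fun b => if o b = 0 then 0 else max 0 (o b - k b) / o b with hμ
  set ν : ℝ → ℝ := fun a => if W = 0 then 0 else max 0 ((k a : ℝ) - o a) / W with hν
  set r : ι → ℝ := fun t => ∑ b ∈ S, π t b * μ b with hr'
  set π' : ι → ℝ → ℝ := fun t a => π t a * (1 - μ a) + r t * ν a with hπ'
  have hμmem : ∀ b ∈ S, 0 ≤ μ b ∧ μ b ≤ 1 := by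
    intro b hb
    rw [hμ]
    by_cases h : o b = 0
    · simp [h]
    · have hpos : 0 < o b := lt_of_le_of_ne (ho0 b hb) (Ne.symm h)
      simp only [h, if_neg, if_false]
      constructor
      · exact div_nonneg (le_max_left _ _) hpos.le
      · rw [div_le_one hpos]
        exact max_le hpos.le (sub_le_self _ (Nat.cast_nonneg _))
  have hoμ : ∀ b ∈ S, o b * μ b = max 0 (o b - k b) := by
    intro b hb
    rw [hμ]
    by_cases h : o b = 0
    · have h' : o b - (k b : ℝ) ≤ 0 := by rw [h]; simp
      rw [max_eq_left h', h, zero_mul]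
    · simp only [hμ, h, if_neg, if_false]
      field_simp
  have hominμ : ∀ b ∈ S, o b * (1 - μ b) = min (o b) (k b) := by
    intro b hb
    have := hoμ b hb
    rcases le_total (o b) ((k b : ℝ)) with h | h
    · rw [mul_sub, mul_one, this, max_eq_left (by linarith), min_eq_left h]; ring
    · rw [mul_sub, mul_one, this, max_eq_right (by linarith), min_eq_right h]; ring
  have hμW0 : W = 0 → ∀ b ∈ S, μ b = 0 := by
    intro hw b hb
    have hterm : max 0 (o b - k b) = 0 := by
      have := (Finset.sum_eq_zero_iff_of_nonneg (fun b _ => le_max_left (0:ℝ) _)).1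
        (hW ▸ hw) b hb
      exact this
    rw [hμ]
    by_cases h : o b = 0
    · simp [h]
    · simp [h, hterm]
  have hrt0 : ∀ t, 0 ≤ r t := by
    intro t
    exact Finset.sum_nonneg fun b hb => mul_nonneg (hπ0 t b hb) (hμmem b hb).1
  have hrtrow : ∀ t, r t ≤ 1 := by
    intro t
    rw [hr']
    calc ∑ b ∈ S, π t b * μ b ≤ ∑ b ∈ S, π t b * 1 :=
          Finset.sum_le_sum fun b hb =>
            mul_le_mul_of_nonneg_left (hμmem b hb).2 (hπ0 t b hb)
      _ = 1 := by simp [hrow t]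
  have hrsum : ∑ t : ι, r t = W := by
    rw [hr', Finset.sum_comm]
    rw [hW]
    refine Finset.sum_congr rfl fun b hb => ?_
    rw [← Finset.sum_mul]
    exact hoμ b hb
  have hνsum : ∑ a ∈ S, ν a = if W = 0 then 0 else 1 := by
    rw [hν]
    by_cases h : W = 0
    · simp [h]
    · simp only [h, if_neg, if_false]
      rw [← Finset.sum_div, hWsum]
      field_simp
  have hν0 : ∀ a, 0 ≤ ν a := by
    intro a
    rw [hν]
    by_cases h : W = 0
    · simp [h]
    · simp only [h, if_neg, if_false]
      exact div_nonneg (le_max_left _ _) hW0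
  have hπ'0 : ∀ t a, a ∈ S → 0 ≤ π' t a := by
    intro t a ha
    rw [hπ']
    have h1 : 0 ≤ π t a * (1 - μ a) :=
      mul_nonneg (hπ0 t a ha) (by linarith [(hμmem a ha).2])
    have h2 : 0 ≤ r t * ν a := mul_nonneg (hrt0 t) (hν0 a)
    positivity
  have habs1 : ∀ (t : ι), ∀ a ∈ S, |p t - a| ≤ 1 := by
    intro t a ha
    obtain ⟨hp0, hp1⟩ := hp t
    obtain ⟨ha0, ha1⟩ := hS a ha
    rw [abs_le]
    constructor <;> linarith
  have hπ'row : ∀ t, ∑ a ∈ S, π' t a = 1 := by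
    intro t
    rw [hπ', Finset.sum_add_distrib]
    have h1 : ∑ a ∈ S, π t a * (1 - μ a) = 1 - r t := by
      have : ∀ a ∈ S, π t a * (1 - μ a) = π t a - π t a * μ a := fun a _ => by ring
      rw [Finset.sum_congr rfl this, Finset.sum_sub_distrib, hrow t, hr']
    have h2 : ∑ a ∈ S, r t * ν a = r t * (if W = 0 then 0 else 1) := by
      rw [← Finset.mul_sum, hνsum]
    rw [h1, h2]
    by_cases h : W = 0
    · have : r t = 0 := by
        rw [hr']
        exact Finset.sum_eq_zero fun b hb => by rw [hμW0 h b hb, mul_zero]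
      rw [this]; simp [h]
    · simp [h]
  have hπ'col : ∀ a ∈ S, ∑ t : ι, π' t a = (k a : ℝ) := by
    intro a ha
    rw [hπ']
    simp only []
    rw [Finset.sum_add_distrib, ← Finset.sum_mul, ← Finset.sum_mul, hrsum]
    have hWν : W * ν a = max 0 ((k a : ℝ) - o a) := by
      rw [hν]
      by_cases h : W = 0
      · have hzz : ∑ b ∈ S, max 0 ((k b : ℝ) - o b) = 0 := by rw [hWsum, h]
        have hmax : max 0 ((k a : ℝ) - o a) = 0 :=
          (Finset.sum_eq_zero_iff_of_nonneg (fun b _ => le_max_left (0:ℝ) _)).1 hzz a ha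
        rw [h, zero_mul]
        exact hmax.symm
      · simp only [h, if_neg, if_false]
        field_simp
    have : (∑ t : ι, π t a) = o a := rfl
    rw [this, hWν, hominμ a ha]
    rcases le_total (o a) ((k a : ℝ)) with h | h
    · rw [min_eq_left h, max_eq_right (by linarith)]; ring
    · rw [min_eq_right h, max_eq_left (by linarith)]; ring
  have hWcard : W ≤ (S.card : ℝ) := by
    rw [hW]
    calc ∑ b ∈ S, max 0 (o b - k b) ≤ ∑ b ∈ S, (1 : ℝ) := by
          refine Finset.sum_le_sum fun b hb => ?_
          have := hk1 b hb
          rw [abs_le] at this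
          exact max_le zero_le_one (by linarith [this.1])
      _ = S.card := by simp
  have hπ'cost : ∑ t : ι, ∑ a ∈ S, π' t a * |p t - a|
      ≤ (∑ t : ι, ∑ a ∈ S, π t a * |p t - a|) + S.card := by
    have hsplit : ∀ t : ι, ∑ a ∈ S, π' t a * |p t - a|
        ≤ (∑ a ∈ S, π t a * |p t - a|) + r t := by
      intro t
      rw [hπ']
      simp only []
      have : ∀ a ∈ S, (π t a * (1 - μ a) + r t * ν a) * |p t - a|
          ≤ π t a * |p t - a| + r t * ν a := by
        intro a ha
        have h0 : 0 ≤ π t a := hπ0 t a ha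
        have h1 : 0 ≤ |p t - a| := abs_nonneg _
        have h2 : 1 - μ a ≤ 1 := by linarith [(hμmem a ha).1]
        have hb1 : π t a * (1 - μ a) * |p t - a| ≤ π t a * |p t - a| := by
          calc π t a * (1 - μ a) * |p t - a| = (1 - μ a) * (π t a * |p t - a|) := by ring
            _ ≤ 1 * (π t a * |p t - a|) :=
              mul_le_mul_of_nonneg_right h2 (mul_nonneg h0 h1)
            _ = π t a * |p t - a| := one_mul _
        have h0' : 0 ≤ r t * ν a := mul_nonneg (hrt0 t) (hν0 a)
        have hb2 : r t * ν a * |p t - a| ≤ r t * ν a := by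
          calc r t * ν a * |p t - a| ≤ r t * ν a * 1 :=
              mul_le_mul_of_nonneg_left (habs1 t a ha) h0'
            _ = r t * ν a := mul_one _
        rw [add_mul]
        exact add_le_add hb1 hb2
      calc ∑ a ∈ S, (π t a * (1 - μ a) + r t * ν a) * |p t - a|
          ≤ ∑ a ∈ S, (π t a * |p t - a| + r t * ν a) := Finset.sum_le_sum this
        _ = (∑ a ∈ S, π t a * |p t - a|) + r t * (if W = 0 then 0 else 1) := by
            rw [Finset.sum_add_distrib, ← Finset.mul_sum, hνsum]
        _ ≤ (∑ a ∈ S, π t a * |p t - a|) + r t := by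
            by_cases h : W = 0 <;> simp [h, hrt0 t]
    calc ∑ t : ι, ∑ a ∈ S, π' t a * |p t - a|
        ≤ ∑ t : ι, ((∑ a ∈ S, π t a * |p t - a|) + r t) := Finset.sum_le_sum fun t _ => hsplit t
      _ = (∑ t : ι, ∑ a ∈ S, π t a * |p t - a|) + W := by
          rw [Finset.sum_add_distrib, hrsum]
      _ ≤ (∑ t : ι, ∑ a ∈ S, π t a * |p t - a|) + S.card := by linarith
  obtain ⟨σ, hσS, hσcard, hσcost⟩ := transport p S π' k hπ'0 hπ'row hπ'col
  exact ⟨σ, k, hσS, hσcard, fun a ha => hk1 a ha, le_trans hσcost hπ'cost⟩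


/-- Rounding lemma: a perfectly calibrated tuple of distributions over a common
finite set S witnesses CalDist(x,p) ≤ ‖p − D‖₁ + 4|S|. -/

theorem sparse_rounding (T : ℕ) (x p : Fin T → ℝ)
    (hx : ∀ t, x t = 0 ∨ x t = 1) (hp : ∀ t, p t ∈ Set.Icc (0:ℝ) 1)
    (S : Finset ℝ) (hS : ∀ a ∈ S, a ∈ Set.Icc (0:ℝ) 1)
    (D : Fin T → ℝ → ℝ)
    (hD0 : ∀ t a, 0 ≤ D t a)
    (hDsupp : ∀ t a, a ∉ S → D t a = 0)
    (hDsum : ∀ t, ∑ a ∈ S, D t a = 1)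
    (hcal : ∀ α : ℝ, ∑ t, (x t - α) * D t α = 0) :
    sInf {d : ℝ | ∃ q : Fin T → ℝ, (∀ t, q t ∈ Set.Icc (0:ℝ) 1) ∧
        (∀ α : ℝ, ∑ t, (x t - q t) * (if q t = α then 1 else 0) = 0) ∧
        d = ∑ t, |p t - q t|} ≤
      (∑ t, ∑ a ∈ S, D t a * |p t - a|) + 4 * S.card := by
  classical
  -- the two classes
  obtain ⟨σ₁, k₁, hσ₁S, hk₁card, hk₁close, hcost₁⟩ :=
    class_assign (ι := {t : Fin T // x t = 1}) (fun t => p t.1) (fun t => hp t.1) S hS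
      (fun t a => D t.1 a) (fun t a _ => hD0 t.1 a) (fun t => hDsum t.1)
  obtain ⟨σ₀, k₀, hσ₀S, hk₀card, hk₀close, hcost₀⟩ :=
    class_assign (ι := {t : Fin T // x t = 0}) (fun t => p t.1) (fun t => hp t.1) S hS
      (fun t a => D t.1 a) (fun t a _ => hD0 t.1 a) (fun t => hDsum t.1)
  set c : Fin T → ℝ := fun t =>
    if h : x t = 1 then σ₁ ⟨t, h⟩ else σ₀ ⟨t, (hx t).resolve_right h⟩ with hc
  set f : ℝ → ℝ := fun a =>
    if k₁ a + k₀ a = 0 then 0 else (k₁ a : ℝ) / ((k₁ a : ℝ) + (k₀ a : ℝ)) with hf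
  set q : Fin T → ℝ := fun t => f (c t) with hq
  have hcS : ∀ t, c t ∈ S := by
    intro t
    rw [hc]
    by_cases h : x t = 1
    · simp only [h, dif_pos]; exact hσ₁S _
    · simp only [h, dif_neg, not_false_iff]; exact hσ₀S _
  have hfmem : ∀ a, f a ∈ Set.Icc (0:ℝ) 1 := by
    intro a
    rw [hf]
    by_cases h : k₁ a + k₀ a = 0
    · simp [h]
    · simp only [h, if_neg, if_false]
      have hpos : (0:ℝ) < (k₁ a : ℝ) + (k₀ a : ℝ) := by
        have h2 : 0 < k₁ a + k₀ a := Nat.pos_of_ne_zero h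
        exact_mod_cast h2
      rw [Set.mem_Icc]
      constructor
      · positivity
      · rw [div_le_one hpos]
        have hn0 : (0:ℝ) ≤ (k₀ a : ℝ) := Nat.cast_nonneg _
        have hn1 : (0:ℝ) ≤ (k₁ a : ℝ) := Nat.cast_nonneg _
        linarith
  -- counting in fibers
  have hcount1 : ∀ a ∈ S,
      ((univ : Finset (Fin T)).filter (fun t => c t = a ∧ x t = 1)).card = k₁ a := by
    intro a ha
    rw [← hk₁card a ha]
    refine Finset.card_bij (fun (t : Fin T) ht => (⟨t, by
      simp only [mem_filter] at ht; exact ht.2.2⟩ : {t : Fin T // x t = 1})) ?_ ?_ ?_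
    · intro t ht
      simp only [mem_filter, mem_univ, true_and] at ht ⊢
      have h1 := ht.1
      rw [hc] at h1
      simpa [dif_pos ht.2] using h1
    · intro t1 ht1 t2 ht2 h
      exact congrArg Subtype.val h
    · intro s hs
      simp only [mem_filter, mem_univ, true_and] at hs
      refine ⟨s.1, ?_, by simp⟩
      simp only [mem_filter, mem_univ, true_and]
      refine ⟨?_, s.2⟩
      rw [hc]
      simp only [s.2, dif_pos]
      rw [← hs]
  have hcount0 : ∀ a ∈ S,
      ((univ : Finset (Fin T)).filter (fun t => c t = a ∧ x t = 0)).card = k₀ a := by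
    intro a ha
    rw [← hk₀card a ha]
    refine Finset.card_bij (fun (t : Fin T) ht => (⟨t, by
      simp only [mem_filter] at ht; exact ht.2.2⟩ : {t : Fin T // x t = 0})) ?_ ?_ ?_
    · intro t ht
      simp only [mem_filter, mem_univ, true_and] at ht ⊢
      have h0 := ht.2
      have hne : ¬ (x t = 1) := by rw [h0]; norm_num
      have h1 := ht.1
      rw [hc] at h1
      simpa [dif_neg hne] using h1
    · intro t1 ht1 t2 ht2 h
      exact congrArg Subtype.val h
    · intro s hs
      simp only [mem_filter, mem_univ, true_and] at hs
      refine ⟨s.1, ?_, by simp⟩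
      simp only [mem_filter, mem_univ, true_and]
      refine ⟨?_, s.2⟩
      have hne : ¬ (x s.1 = 1) := by rw [s.2]; norm_num
      rw [hc]
      simp only [hne, dif_neg, not_false_iff]
      rw [← hs]
  have hfibcard : ∀ a ∈ S,
      ((univ : Finset (Fin T)).filter (fun t => c t = a)).card = k₁ a + k₀ a := by
    intro a ha
    have hsplit := Finset.card_filter_add_card_filter_not
      (s := (univ : Finset (Fin T)).filter (fun t => c t = a)) (p := fun t => x t = 1)
    rw [Finset.filter_filter, Finset.filter_filter] at hsplit
    have hneg : ((univ : Finset (Fin T)).filter (fun t => c t = a ∧ ¬ x t = 1))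
        = ((univ : Finset (Fin T)).filter (fun t => c t = a ∧ x t = 0)) := by
      apply Finset.filter_congr
      intro t _
      rcases hx t with h | h <;> simp [h]
    rw [hneg, hcount1 a ha, hcount0 a ha] at hsplit
    exact hsplit.symm
  have hsumx : ∀ a ∈ S,
      ∑ t ∈ (univ : Finset (Fin T)).filter (fun t => c t = a), x t = (k₁ a : ℝ) := by
    intro a ha
    have hpt : ∀ t ∈ (univ : Finset (Fin T)).filter (fun t => c t = a),
        x t = if x t = 1 then (1:ℝ) else 0 := by
      intro t _
      rcases hx t with h | h <;> simp [h]
    rw [Finset.sum_congr rfl hpt, Finset.sum_boole, Finset.filter_filter]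
    exact_mod_cast hcount1 a ha
  have hqfa : ∀ (a : ℝ) (t : Fin T), c t = a → q t = f a := by
    intro a t hct
    rw [hq]
    simp only []
    rw [hct]
  have hcalq : ∀ α : ℝ, ∑ t, (x t - q t) * (if q t = α then 1 else 0) = 0 := by
    intro α
    rw [← Finset.sum_fiberwise_of_maps_to (g := c) (t := S) (fun t _ => hcS t)
      (fun t => (x t - q t) * (if q t = α then 1 else 0))]
    apply Finset.sum_eq_zero
    intro a ha
    by_cases hfa : f a = α
    · have hterm : ∀ t ∈ (univ : Finset (Fin T)).filter (fun t => c t = a),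
          (x t - q t) * (if q t = α then 1 else 0) = x t - f a := by
        intro t ht
        have hct := (Finset.mem_filter.1 ht).2
        rw [hqfa a t hct, hfa, if_pos rfl, mul_one]
      rw [Finset.sum_congr rfl hterm, Finset.sum_sub_distrib, hsumx a ha,
        Finset.sum_const, hfibcard a ha]
      by_cases h : k₁ a + k₀ a = 0
      · have h1 : k₁ a = 0 := by omega
        have h2 : f a = 0 := by rw [hf]; simp [h]
        rw [h, h1, h2]
        simp
      · have h2 : f a = (k₁ a : ℝ) / ((k₁ a : ℝ) + (k₀ a : ℝ)) := by rw [hf]; simp only [h, if_false]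
        have hpos : (0:ℝ) < (k₁ a : ℝ) + (k₀ a : ℝ) := by
          have h3 : 0 < k₁ a + k₀ a := Nat.pos_of_ne_zero h
          exact_mod_cast h3
        have h4 : ((k₁ a : ℝ) + (k₀ a : ℝ)) * ((k₁ a : ℝ) / ((k₁ a : ℝ) + (k₀ a : ℝ)))
            = (k₁ a : ℝ) := by field_simp
        rw [h2, nsmul_eq_mul]
        push_cast
        linarith
    · have hterm : ∀ t ∈ (univ : Finset (Fin T)).filter (fun t => c t = a),
          (x t - q t) * (if q t = α then 1 else 0) = 0 := by
        intro t ht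
        have hct := (Finset.mem_filter.1 ht).2
        rw [hqfa a t hct, if_neg hfa, mul_zero]
      rw [Finset.sum_congr rfl hterm]
      exact Finset.sum_const_zero
  have hsplitsum : ∀ g : Fin T → ℝ,
      ∑ t, g t = (∑ t : {t : Fin T // x t = 1}, g t.1)
        + ∑ t : {t : Fin T // x t = 0}, g t.1 := by
    intro g
    rw [← Finset.sum_filter_add_sum_filter_not univ (fun t => x t = 1) g]
    congr 1
    · exact Finset.sum_subtype _ (by simp) g
    · have : (univ : Finset (Fin T)).filter (fun t => ¬ x t = 1)
          = (univ : Finset (Fin T)).filter (fun t => x t = 0) := by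
        apply Finset.filter_congr
        intro t _
        rcases hx t with h | h <;> simp [h]
      rw [this]
      exact Finset.sum_subtype _ (by simp) g
  have hc1 : ∀ t : {t : Fin T // x t = 1}, c t.1 = σ₁ t := by
    intro t
    rw [hc]
    simp only [t.2, dif_pos]
  have hc0 : ∀ t : {t : Fin T // x t = 0}, c t.1 = σ₀ t := by
    intro t
    have hne : ¬ (x t.1 = 1) := by rw [t.2]; norm_num
    rw [hc]
    simp only [hne, dif_neg, not_false_iff]
  have ho_split : ∀ a ∈ S,
      (1 - a) * (∑ t : {t : Fin T // x t = 1}, D t.1 a)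
        - a * (∑ t : {t : Fin T // x t = 0}, D t.1 a) = 0 := by
    intro a ha
    have h0 := hcal a
    rw [hsplitsum (fun t => (x t - a) * D t a)] at h0
    have e1 : ∑ t : {t : Fin T // x t = 1}, (x t.1 - a) * D t.1 a
        = (1 - a) * ∑ t : {t : Fin T // x t = 1}, D t.1 a := by
      rw [Finset.mul_sum]
      refine Finset.sum_congr rfl fun t _ => ?_
      rw [t.2]
    have e0 : ∑ t : {t : Fin T // x t = 0}, (x t.1 - a) * D t.1 a
        = (- a) * ∑ t : {t : Fin T // x t = 0}, D t.1 a := by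
      rw [Finset.mul_sum]
      refine Finset.sum_congr rfl fun t _ => ?_
      rw [t.2]
      ring
    rw [e1, e0] at h0
    linarith
  -- cost of the bucket step
  have hstep4 : ∑ t, |c t - q t| ≤ (S.card : ℝ) := by
    rw [← Finset.sum_fiberwise_of_maps_to (g := c) (t := S) (fun t _ => hcS t)
      (fun t => |c t - q t|)]
    have hperA : ∀ a ∈ S, ∑ t ∈ (univ : Finset (Fin T)).filter (fun t => c t = a),
        |c t - q t| ≤ 1 := by
      intro a ha
      have hterm : ∀ t ∈ (univ : Finset (Fin T)).filter (fun t => c t = a),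
          |c t - q t| = |a - f a| := by
        intro t ht
        have hct := (Finset.mem_filter.1 ht).2
        rw [hqfa a t hct, hct]
      rw [Finset.sum_congr rfl hterm, Finset.sum_const, hfibcard a ha, nsmul_eq_mul]
      -- now bound ((k₁ a + k₀ a : ℕ) : ℝ) * |a - f a| ≤ 1
      by_cases h : k₁ a + k₀ a = 0
      · rw [h]; simp
      · have h2 : f a = (k₁ a : ℝ) / ((k₁ a : ℝ) + (k₀ a : ℝ)) := by rw [hf]; simp only [h, if_false]
        have hpos : (0:ℝ) < (k₁ a : ℝ) + (k₀ a : ℝ) := by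
          have h3 : 0 < k₁ a + k₀ a := Nat.pos_of_ne_zero h
          exact_mod_cast h3
        have hcast : ((k₁ a + k₀ a : ℕ) : ℝ) = (k₁ a : ℝ) + (k₀ a : ℝ) := by push_cast; ring
        set K₁ := (k₁ a : ℝ)
        set K₀ := (k₀ a : ℝ)
        have habs : ((k₁ a + k₀ a : ℕ) : ℝ) * |a - f a| = |a * (K₁ + K₀) - K₁| := by
          rw [hcast, h2]
          have hrepr : a - K₁ / (K₁ + K₀) = (a * (K₁ + K₀) - K₁) / (K₁ + K₀) := by
            field_simp
          rw [hrepr, abs_div, abs_of_pos hpos, mul_comm,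
            div_mul_cancel₀ _ (ne_of_gt hpos)]
        rw [habs]
        set u := K₁ - (∑ t : {t : Fin T // x t = 1}, D t.1 a) with hu
        set v := K₀ - (∑ t : {t : Fin T // x t = 0}, D t.1 a) with hv
        have hueq : |u| ≤ 1 := hk₁close a ha
        have hveq : |v| ≤ 1 := hk₀close a ha
        have hsp := ho_split a ha
        have heq : a * (K₁ + K₀) - K₁ = (a - 1) * u + a * v := by
          rw [hu, hv]
          linear_combination -hsp
        rw [heq]
        obtain ⟨ha0, ha1⟩ := hS a ha
        calc |(a - 1) * u + a * v| ≤ |(a - 1) * u| + |a * v| := abs_add_le _ _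
          _ = |a - 1| * |u| + |a| * |v| := by rw [abs_mul, abs_mul]
          _ = (1 - a) * |u| + a * |v| := by
              rw [abs_of_nonpos (by linarith), abs_of_nonneg ha0]
              ring_nf
          _ ≤ (1 - a) * 1 + a * 1 := by
              have := abs_nonneg u
              have := abs_nonneg v
              gcongr <;> linarith
          _ = 1 := by ring
    calc ∑ a ∈ S, ∑ t ∈ (univ : Finset (Fin T)).filter (fun t => c t = a), |c t - q t|
        ≤ ∑ a ∈ S, (1:ℝ) := Finset.sum_le_sum hperA
      _ = S.card := by simp
  -- cost of the assignment step
  have hstep2 : ∑ t, |p t - c t|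
      ≤ (∑ t, ∑ a ∈ S, D t a * |p t - a|) + 2 * (S.card : ℝ) := by
    rw [hsplitsum (fun t => |p t - c t|), hsplitsum (fun t => ∑ a ∈ S, D t a * |p t - a|)]
    have e1 : ∑ t : {t : Fin T // x t = 1}, |p t.1 - c t.1|
        = ∑ t : {t : Fin T // x t = 1}, |p t.1 - σ₁ t| := by
      refine Finset.sum_congr rfl fun t _ => ?_
      rw [hc1 t]
    have e0 : ∑ t : {t : Fin T // x t = 0}, |p t.1 - c t.1|
        = ∑ t : {t : Fin T // x t = 0}, |p t.1 - σ₀ t| := by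
      refine Finset.sum_congr rfl fun t _ => ?_
      rw [hc0 t]
    rw [e1, e0]
    have := hcost₁
    have := hcost₀
    linarith
  -- total cost
  have htotal : ∑ t, |p t - q t|
      ≤ (∑ t, ∑ a ∈ S, D t a * |p t - a|) + 3 * (S.card : ℝ) := by
    have htri : ∑ t, |p t - q t| ≤ (∑ t, |p t - c t|) + ∑ t, |c t - q t| := by
      rw [← Finset.sum_add_distrib]
      exact Finset.sum_le_sum fun t _ => abs_sub_le (p t) (c t) (q t)
    linarith
  -- conclude via sInf
  have hbdd : BddBelow {d : ℝ | ∃ q : Fin T → ℝ, (∀ t, q t ∈ Set.Icc (0:ℝ) 1) ∧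
      (∀ α : ℝ, ∑ t, (x t - q t) * (if q t = α then 1 else 0) = 0) ∧
      d = ∑ t, |p t - q t|} := by
    refine ⟨0, fun d hd => ?_⟩
    obtain ⟨q', _, _, rfl⟩ := hd
    exact Finset.sum_nonneg fun t _ => abs_nonneg _
  have hmem : (∑ t, |p t - q t|) ∈ {d : ℝ | ∃ q : Fin T → ℝ,
      (∀ t, q t ∈ Set.Icc (0:ℝ) 1) ∧
      (∀ α : ℝ, ∑ t, (x t - q t) * (if q t = α then 1 else 0) = 0) ∧
      d = ∑ t, |p t - q t|} := ⟨q, fun t => hfmem (c t), hcalq, rfl⟩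
  have hcard0 : (0:ℝ) ≤ (S.card : ℝ) := Nat.cast_nonneg _
  calc sInf {d : ℝ | ∃ q : Fin T → ℝ, (∀ t, q t ∈ Set.Icc (0:ℝ) 1) ∧
        (∀ α : ℝ, ∑ t, (x t - q t) * (if q t = α then 1 else 0) = 0) ∧
        d = ∑ t, |p t - q t|} ≤ ∑ t, |p t - q t| := csInf_le hbdd hmem
    _ ≤ (∑ t, ∑ a ∈ S, D t a * |p t - a|) + 3 * (S.card : ℝ) := htotal
    _ ≤ (∑ t, ∑ a ∈ S, D t a * |p t - a|) + 4 * S.card := by linarith
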